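/- Let K be a finite set of size ρ ≥ 1 and (ξ_k)_{k∈K} nonnegative reals with S = Σ ξ_k > 0. Consider a sequence of counter vectors (n_k(t))_{k∈K} with n_k(0) = 0, where at each step t exactly one coordinate is incremented by 1, and the incremented coordinate k always satisfies n_k(t) ≤ t · ξ_k / S (such a coordinate always exists). Then for every time t and every k ∈ K: t · ξ_k / S − ρ ≤ n_k(t) ≤ t · ξ_k / S + 1. -/

import Mathlib

theorem stmt_3 {ι : Type*} (K : Finset ι) (ρ : ℕ) (hρ : 1 ≤ ρ) (hcard : K.card = ρ)
    (ξ : ι → ℝ) (hξ : ∀ k ∈ K, 0 ≤ ξ k)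
    (S : ℝ) (hS : S = ∑ k ∈ K, ξ k) (hSpos : 0 < S)
    (n : ℕ → ι → ℕ) (h0 : ∀ k, n 0 k = 0)
    (hstep : ∀ t : ℕ, ∃ k ∈ K, (n t k : ℝ) ≤ (t : ℝ) * ξ k / S ∧
      n (t + 1) k = n t k + 1 ∧ ∀ l, l ≠ k → n (t + 1) l = n t l) :
    ∀ t : ℕ, ∀ k ∈ K, (t : ℝ) * ξ k / S - ρ ≤ n t k ∧ (n t k : ℝ) ≤ (t : ℝ) * ξ k / S + 1 := by
  classical
  have upper : ∀ t : ℕ, ∀ k ∈ K, (n t k : ℝ) ≤ (t : ℝ) * ξ k / S + 1 := by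
    intro t
    induction t with
    | zero => intro k hk; simp [h0]
    | succ t ih =>
      obtain ⟨k₀, hk₀K, hle, heq, hoth⟩ := hstep t
      intro k hk
      have hmono : (t : ℝ) * ξ k / S ≤ ((t : ℕ) + 1 : ℝ) * ξ k / S := by
        have h1 : (t : ℝ) * ξ k ≤ ((t : ℕ) + 1 : ℝ) * ξ k := by nlinarith [hξ k hk]
        exact div_le_div_of_nonneg_right h1 hSpos.le
      by_cases h : k = k₀
      · subst h
        rw [heq]
        push_cast
        linarith
      · rw [hoth k h]
        have := ih k hk
        push_cast
        linarith
  have hsum : ∀ t : ℕ, ∑ l ∈ K, n t l = t := by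
    intro t
    induction t with
    | zero => simp [h0]
    | succ t ih =>
      obtain ⟨k₀, hk₀K, hle, heq, hoth⟩ := hstep t
      have hc : ∑ l ∈ K, n (t + 1) l = ∑ l ∈ K, (n t l + if l = k₀ then 1 else 0) := by
        apply Finset.sum_congr rfl
        intro l hl
        by_cases h : l = k₀
        · subst h; simp [heq]
        · simp [h, hoth l h]
      rw [hc, Finset.sum_add_distrib, Finset.sum_ite_eq' K k₀ (fun _ => 1), if_pos hk₀K, ih]
  intro t k hk
  refine ⟨?_, upper t k hk⟩
  have hsumR : ∑ l ∈ K, (n t l : ℝ) = (t : ℝ) := by exact_mod_cast congrArg (Nat.cast : ℕ → ℝ) (hsum t)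
  have herase : (n t k : ℝ) = (t : ℝ) - ∑ l ∈ K.erase k, (n t l : ℝ) := by
    have := Finset.sum_erase_add K (fun l => (n t l : ℝ)) hk
    linarith [hsumR, this]
  have hξerase : ∑ l ∈ K.erase k, ξ l = S - ξ k := by
    have := Finset.sum_erase_add K ξ hk
    linarith [hS ▸ this]
  have hb : ∑ l ∈ K.erase k, (n t l : ℝ) ≤ ∑ l ∈ K.erase k, ((t : ℝ) * ξ l / S + 1) :=
    Finset.sum_le_sum (fun l hl => upper t l (Finset.mem_of_mem_erase hl))
  have hcarde : (K.erase k).card = ρ - 1 := by rw [Finset.card_erase_of_mem hk, hcard]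
  have hval : ∑ l ∈ K.erase k, ((t : ℝ) * ξ l / S + 1) = (t : ℝ) * (S - ξ k) / S + (ρ - 1) := by
    rw [Finset.sum_add_distrib, Finset.sum_const, hcarde]
    have : ∑ l ∈ K.erase k, (t : ℝ) * ξ l / S = (t : ℝ) * (S - ξ k) / S := by
      rw [← hξerase, Finset.mul_sum, Finset.sum_div]
    rw [this]
    have : ((ρ - 1 : ℕ) : ℝ) = (ρ : ℝ) - 1 := by
      have : (1 : ℕ) ≤ ρ := hρ
      push_cast [Nat.cast_sub this]
      ring
    simp [this]
  have hfield : (t : ℝ) * (S - ξ k) / S = (t : ℝ) - (t : ℝ) * ξ k / S := by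
    field_simp
  rw [herase]
  rw [hval] at hb
  rw [hfield] at hb
  linarith
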